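/- Let Σ = (x₀, …, x_{n+2}) be a taut string in a cube complex of dimension at most n, equipped with the l∞ metric on cubes. Then the length of Σ is at least 1. -/

import Mathlib

open scoped ENNReal

/-- A point of `ℝ^n` lying in the unit cube `[0,1]^n`. -/
def InUnitCube {n : ℕ} (x : Fin n → ℝ) : Prop := ∀ l, x l ∈ Set.Icc (0 : ℝ) 1

/-- A face of the cube `[0,1]^n` is encoded by `c : Fin n → Option Bool`:
`some b` freezes the coordinate at `0` or `1`, `none` leaves it free. -/
def facePoints {n : ℕ} (c : Fin n → Option Bool) : Set (Fin n → ℝ) :=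
  {x | ∀ l, (∀ b, c l = some b → x l = (if b then 1 else 0)) ∧
            (c l = none → x l ∈ Set.Icc (0 : ℝ) 1)}

/-- A cubical isometry between faces of cubes: a bijection of the free coordinates
together with possible reflections. Such maps are isometries for every `l_p`-norm. -/
def IsCubicalIso {n₁ n₂ : ℕ} (c₁ : Fin n₁ → Option Bool) (c₂ : Fin n₂ → Option Bool)
    (h : (Fin n₁ → ℝ) → (Fin n₂ → ℝ)) : Prop :=
  ∃ (σ : {l₂ : Fin n₂ // c₂ l₂ = none} → {l₁ : Fin n₁ // c₁ l₁ = none})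
    (fl : {l₂ : Fin n₂ // c₂ l₂ = none} → Bool),
    Function.Bijective σ ∧
    ∀ x ∈ facePoints c₁,
      (∀ l₂ b, c₂ l₂ = some b → h x l₂ = (if b then 1 else 0)) ∧
      (∀ (l₂ : Fin n₂) (hl : c₂ l₂ = none),
        h x l₂ = if fl ⟨l₂, hl⟩ then 1 - x (σ ⟨l₂, hl⟩).1 else x (σ ⟨l₂, hl⟩).1)

/-- A cube complex: a family of unit cubes glued along faces by cubical isometries.
The relation `rel` identifies points of the disjoint union of the cubes; it is an
equivalence relation on the points of the unit cubes, injective on each cube, and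
any two glued cubes are glued along a pair of faces via a cubical isometry. -/
structure CubeComplex where
  idx : Type
  dim : idx → ℕ
  rel : (Σ i : idx, Fin (dim i) → ℝ) → (Σ i : idx, Fin (dim i) → ℝ) → Prop
  rel_inCube : ∀ a b, rel a b → InUnitCube a.2 ∧ InUnitCube b.2
  rel_refl : ∀ a : Σ i : idx, Fin (dim i) → ℝ, InUnitCube a.2 → rel a a
  rel_symm : ∀ a b, rel a b → rel b a
  rel_trans : ∀ a b c, rel a b → rel b c → rel a c
  rel_inj : ∀ (i : idx) (x y : Fin (dim i) → ℝ), rel ⟨i, x⟩ ⟨i, y⟩ → x = y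
  rel_glue : ∀ i j : idx, (∃ x y, rel ⟨i, x⟩ ⟨j, y⟩) →
    ∃ (c₁ : Fin (dim i) → Option Bool) (c₂ : Fin (dim j) → Option Bool)
      (h : (Fin (dim i) → ℝ) → (Fin (dim j) → ℝ)),
      IsCubicalIso c₁ c₂ h ∧
      ∀ x y, InUnitCube x → InUnitCube y →
        (rel ⟨i, x⟩ ⟨j, y⟩ ↔ x ∈ facePoints c₁ ∧ h x = y)

namespace CubeComplex

variable (C : CubeComplex)

/-- The points of the cubes of the complex. -/
def PrePt : Type := {a : Σ i : C.idx, Fin (C.dim i) → ℝ // InUnitCube a.2}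

/-- The gluing equivalence relation as a setoid. -/
def setoid : Setoid C.PrePt :=
  ⟨fun a b => C.rel a.1 b.1,
    ⟨fun a => C.rel_refl a.1 a.2, fun h => C.rel_symm _ _ h,
      fun h h' => C.rel_trans _ _ _ h h'⟩⟩

/-- The geometric realization `|𝒞|` of the cube complex. -/
def Pts : Type := Quotient C.setoid

/-- The point of `|𝒞|` given by coordinates `x` in the cube `i`. -/
def pt (i : C.idx) (x : Fin (C.dim i) → ℝ) (hx : InUnitCube x) : C.Pts :=
  Quotient.mk C.setoid ⟨⟨i, x⟩, hx⟩

end CubeComplex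

/-- The `l_p` distance on `ℝ^n`, `p ∈ [1,∞]`. -/
noncomputable def lpDist (p : ℝ≥0∞) {n : ℕ} (x y : Fin n → ℝ) : ℝ :=
  if p = ∞ then ⨆ l, |x l - y l|
  else (∑ l, |x l - y l| ^ p.toReal) ^ (1 / p.toReal)

namespace CubeComplex

variable (C : CubeComplex)

/-- A string from `a` to `b` whose segments lie in cubes indexed in `A`: a chain of
pairs of points, each pair lying in a common cube, consecutive pairs matching up. -/
structure StringIn (A : Set C.idx) (a b : C.Pts) where
  m : ℕ
  cube : Fin m → C.idx
  s : ∀ k : Fin m, Fin (C.dim (cube k)) → ℝ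
  e : ∀ k : Fin m, Fin (C.dim (cube k)) → ℝ
  hs : ∀ k, InUnitCube (s k)
  he : ∀ k, InUnitCube (e k)
  hA : ∀ k, cube k ∈ A
  hnil : m = 0 → a = b
  hstart : ∀ h0 : 0 < m, C.pt (cube ⟨0, h0⟩) (s ⟨0, h0⟩) (hs ⟨0, h0⟩) = a
  hend : ∀ h0 : 0 < m,
    C.pt (cube ⟨m - 1, Nat.sub_lt h0 Nat.one_pos⟩) (e ⟨m - 1, Nat.sub_lt h0 Nat.one_pos⟩)
      (he ⟨m - 1, Nat.sub_lt h0 Nat.one_pos⟩) = b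
  hlink : ∀ (k : ℕ) (h1 : k + 1 < m),
    C.pt (cube ⟨k, Nat.lt_of_succ_lt h1⟩) (e ⟨k, Nat.lt_of_succ_lt h1⟩)
        (he ⟨k, Nat.lt_of_succ_lt h1⟩) =
      C.pt (cube ⟨k + 1, h1⟩) (s ⟨k + 1, h1⟩) (hs ⟨k + 1, h1⟩)

/-- The `l_p`-length of a string. -/
noncomputable def StringIn.length {C : CubeComplex} {A : Set C.idx} {a b : C.Pts}
    (p : ℝ≥0∞) (S : C.StringIn A a b) : ℝ :=
  ∑ k : Fin S.m, lpDist p (S.s k) (S.e k)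

/-- The induced length metric restricted to strings in the cubes indexed by `A`. -/
noncomputable def distIn (p : ℝ≥0∞) (A : Set C.idx) (a b : C.Pts) : ℝ :=
  sInf {r | ∃ S : C.StringIn A a b, S.length p = r}

/-- The induced length metric `d_p` on `|𝒞|`. -/
noncomputable def stringDist (p : ℝ≥0∞) (a b : C.Pts) : ℝ :=
  C.distIn p Set.univ a b

/-- The complex has dimension at most `n`. -/
def DimLE (n : ℕ) : Prop := ∀ i, C.dim i ≤ n

end CubeComplex

namespace CubeComplex

variable (C : CubeComplex)

/-- A taut `m`-string `(x₀,…,x_m)` in a cube complex with the `l_∞` metric on the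
cubes.  For each `k`, `s k` and `e k` are the coordinates of `x_k` and `x_{k+1}`
in the maximal cube `cube k` containing both.  The coordinates of consecutive
cubes are matched along their common face by `σ` (with the common face placed at
the origin, so unmatched "new" coordinates vanish at `x_{k+1}`).  Tautness:
(i) no cube contains three consecutive points, (ii) each `x_{k+1}` lies on a
shortest path from `x_k` to `x_{k+2}` inside the union of the two adjacent cubes,
and (iii) the coordinates are monotone along the string. -/
structure TautString (m : ℕ) where
  cube : Fin m → C.idx
  s : ∀ k : Fin m, Fin (C.dim (cube k)) → ℝ
  e : ∀ k : Fin m, Fin (C.dim (cube k)) → ℝ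
  hs : ∀ k, InUnitCube (s k)
  he : ∀ k, InUnitCube (e k)
  /-- consecutive segments match up in the realization -/
  hlink : ∀ (k : ℕ) (h1 : k + 1 < m),
    C.rel ⟨cube ⟨k, Nat.lt_of_succ_lt h1⟩, e ⟨k, Nat.lt_of_succ_lt h1⟩⟩
      ⟨cube ⟨k + 1, h1⟩, s ⟨k + 1, h1⟩⟩
  /-- each cube is a maximal cube containing its two points -/
  hmax : ∀ (k : Fin m) (j : C.idx) (u v : Fin (C.dim j) → ℝ),
    C.rel ⟨j, u⟩ ⟨cube k, s k⟩ → C.rel ⟨j, v⟩ ⟨cube k, e k⟩ →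
      C.dim j ≤ C.dim (cube k)
  /-- the coordinate matching along the common face of consecutive cubes -/
  σ : ∀ (k : ℕ) (h1 : k + 1 < m),
    Fin (C.dim (cube ⟨k + 1, h1⟩)) → Option (Fin (C.dim (cube ⟨k, Nat.lt_of_succ_lt h1⟩)))
  hσinj : ∀ (k : ℕ) (h1 : k + 1 < m) (l l' : Fin (C.dim (cube ⟨k + 1, h1⟩))) l₀,
    σ k h1 l = some l₀ → σ k h1 l' = some l₀ → l = l'
  /-- matched coordinates of `x_{k+1}` agree in both cubes; new coordinates are 0 -/
  hcoord : ∀ (k : ℕ) (h1 : k + 1 < m) (l : Fin (C.dim (cube ⟨k + 1, h1⟩))),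
    (σ k h1 l = none → s ⟨k + 1, h1⟩ l = 0) ∧
    ∀ l₀, σ k h1 l = some l₀ → s ⟨k + 1, h1⟩ l = e ⟨k, Nat.lt_of_succ_lt h1⟩ l₀
  /-- the face of the new cube where all new coordinates vanish is the glued face -/
  hface : ∀ (k : ℕ) (h1 : k + 1 < m) (x : Fin (C.dim (cube ⟨k + 1, h1⟩)) → ℝ),
    InUnitCube x → (∀ l, σ k h1 l = none → x l = 0) →
      ∃ x' : Fin (C.dim (cube ⟨k, Nat.lt_of_succ_lt h1⟩)) → ℝ, InUnitCube x' ∧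
        C.rel ⟨cube ⟨k, Nat.lt_of_succ_lt h1⟩, x'⟩ ⟨cube ⟨k + 1, h1⟩, x⟩ ∧
        ∀ l l₀, σ k h1 l = some l₀ → x' l₀ = x l
  /-- (iii) monotone coordinates -/
  hmono : ∀ (k : Fin m) (l : Fin (C.dim (cube k))), s k l ≤ e k l
  /-- (i) no cube contains three consecutive points of the string -/
  hno3 : ∀ (k : ℕ) (h1 : k + 1 < m),
    ¬ ∃ (j : C.idx) (u v w : Fin (C.dim j) → ℝ),
      C.rel ⟨j, u⟩ ⟨cube ⟨k, Nat.lt_of_succ_lt h1⟩, s ⟨k, Nat.lt_of_succ_lt h1⟩⟩ ∧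
      C.rel ⟨j, v⟩ ⟨cube ⟨k + 1, h1⟩, s ⟨k + 1, h1⟩⟩ ∧
      C.rel ⟨j, w⟩ ⟨cube ⟨k + 1, h1⟩, e ⟨k + 1, h1⟩⟩
  /-- (ii) `x_{k+1}` lies in the interval `I_{L}(x_k, x_{k+2})` for the length
  metric of `L`, the union of the two consecutive cubes -/
  hinterval : ∀ (k : ℕ) (h1 : k + 1 < m),
    C.distIn ⊤ {cube ⟨k, Nat.lt_of_succ_lt h1⟩, cube ⟨k + 1, h1⟩}
        (C.pt (cube ⟨k, Nat.lt_of_succ_lt h1⟩) (s ⟨k, Nat.lt_of_succ_lt h1⟩)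
          (hs ⟨k, Nat.lt_of_succ_lt h1⟩))
        (C.pt (cube ⟨k + 1, h1⟩) (s ⟨k + 1, h1⟩) (hs ⟨k + 1, h1⟩)) +
      C.distIn ⊤ {cube ⟨k, Nat.lt_of_succ_lt h1⟩, cube ⟨k + 1, h1⟩}
        (C.pt (cube ⟨k + 1, h1⟩) (s ⟨k + 1, h1⟩) (hs ⟨k + 1, h1⟩))
        (C.pt (cube ⟨k + 1, h1⟩) (e ⟨k + 1, h1⟩) (he ⟨k + 1, h1⟩)) =
    C.distIn ⊤ {cube ⟨k, Nat.lt_of_succ_lt h1⟩, cube ⟨k + 1, h1⟩}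
        (C.pt (cube ⟨k, Nat.lt_of_succ_lt h1⟩) (s ⟨k, Nat.lt_of_succ_lt h1⟩)
          (hs ⟨k, Nat.lt_of_succ_lt h1⟩))
        (C.pt (cube ⟨k + 1, h1⟩) (e ⟨k + 1, h1⟩) (he ⟨k + 1, h1⟩))

/-- The `l_∞`-length of a taut string. -/
noncomputable def TautString.length {C : CubeComplex} {m : ℕ} (T : C.TautString m) : ℝ :=
  ∑ k : Fin m, lpDist ⊤ (T.s k) (T.e k)

end CubeComplex


section AuxLemmas

open Function

lemma lpDist_top_def {n : ℕ} (x y : Fin n → ℝ) :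
    lpDist ⊤ x y = ⨆ l, |x l - y l| := by simp [lpDist]

lemma lpDist_top_nonneg {n : ℕ} (x y : Fin n → ℝ) : 0 ≤ lpDist ⊤ x y := by
  rw [lpDist_top_def]; exact Real.iSup_nonneg fun l => abs_nonneg _

lemma abs_le_lpDist_top {n : ℕ} (x y : Fin n → ℝ) (l : Fin n) :
    |x l - y l| ≤ lpDist ⊤ x y := by
  rw [lpDist_top_def]
  exact le_ciSup (f := fun l => |x l - y l|) (Set.finite_range _).bddAbove l

namespace CubeComplex

variable {C : CubeComplex} {m : ℕ}

/-- Tautness (i) forces every gluing step to introduce a fresh coordinate on which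
the next segment actually moves. -/
lemma TautString.fresh (T : C.TautString m) (k : ℕ) (h1 : k + 1 < m) :
    ∃ l, T.σ k h1 l = none ∧ 0 < T.e ⟨k + 1, h1⟩ l := by
  by_contra hcon
  push_neg at hcon
  have hz : ∀ l, T.σ k h1 l = none → T.e ⟨k + 1, h1⟩ l = 0 := fun l hl =>
    le_antisymm (hcon l hl) (T.he ⟨k + 1, h1⟩ l).1
  obtain ⟨x', hx', hrel, -⟩ := T.hface k h1 (T.e ⟨k + 1, h1⟩) (T.he ⟨k + 1, h1⟩) hz
  exact T.hno3 k h1 ⟨T.cube ⟨k, Nat.lt_of_succ_lt h1⟩,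
    T.s ⟨k, Nat.lt_of_succ_lt h1⟩, T.e ⟨k, Nat.lt_of_succ_lt h1⟩, x',
    C.rel_refl _ (T.hs ⟨k, Nat.lt_of_succ_lt h1⟩), T.hlink k h1, hrel⟩

/-- A coordinate whose value at the end of a segment lies strictly between `0` and
`1` must be matched (via `σ`) to a coordinate of the next cube. -/
lemma TautString.no_drop (T : C.TautString m) (k : ℕ) (h1 : k + 1 < m)
    (l₀ : Fin (C.dim (T.cube ⟨k, Nat.lt_of_succ_lt h1⟩)))
    (hpos : 0 < T.e ⟨k, Nat.lt_of_succ_lt h1⟩ l₀)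
    (hlt : T.e ⟨k, Nat.lt_of_succ_lt h1⟩ l₀ < 1) :
    ∃ l, T.σ k h1 l = some l₀ := by
  by_contra hno
  push_neg at hno
  have hk := Nat.lt_of_succ_lt h1
  obtain ⟨c₁, c₂, h, ⟨σ', fl, hbij, hspec⟩, hglue⟩ :=
    C.rel_glue (T.cube ⟨k, hk⟩) (T.cube ⟨k + 1, h1⟩)
      ⟨T.e ⟨k, hk⟩, T.s ⟨k + 1, h1⟩, T.hlink k h1⟩
  have hek := (hglue (T.e ⟨k, hk⟩) (T.s ⟨k + 1, h1⟩) (T.he _) (T.hs _)).mp (T.hlink k h1)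
  cases hcl : c₁ l₀ with
  | some b =>
    have hb := (hek.1 l₀).1 b hcl
    cases b <;> simp at hb <;> linarith
  | none =>
    obtain ⟨⟨l₂, hl₂⟩, hl₂f⟩ := hbij.2 ⟨l₀, hcl⟩
    have hs21 : T.s ⟨k + 1, h1⟩ l₂ =
        (if fl ⟨l₂, hl₂⟩ then 1 - T.e ⟨k, hk⟩ l₀ else T.e ⟨k, hk⟩ l₀) := by
      have h2 := (hspec (T.e ⟨k, hk⟩) hek.1).2 l₂ hl₂
      rw [hek.2, hl₂f] at h2
      exact h2
    cases hσ2 : T.σ k h1 l₂ with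
    | none =>
      have h0 := (T.hcoord k h1 l₂).1 hσ2
      rw [h0] at hs21
      cases hb : fl ⟨l₂, hl₂⟩ <;> rw [hb] at hs21 <;> simp at hs21 <;> linarith
    | some l₁ =>
      have hl₁ne : l₁ ≠ l₀ := fun he => hno l₂ (by rw [hσ2, he])
      -- partner points on the common face, with the matched coordinate l₁ set to t
      have key : ∀ t : ℝ, 0 ≤ t → t ≤ 1 →
          ∃ x', InUnitCube x' ∧ x' ∈ facePoints c₁ ∧
            h x' = Function.update (T.s ⟨k + 1, h1⟩) l₂ t ∧ x' l₁ = t := by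
        intro t ht0 ht1
        set x := Function.update (T.s ⟨k + 1, h1⟩) l₂ t with hxdef
        have hxunit : InUnitCube x := by
          intro l
          rcases eq_or_ne l l₂ with rfl | hne
          · simp only [hxdef, Function.update_self]
            exact ⟨ht0, ht1⟩
          · simp only [hxdef, Function.update_of_ne hne]
            exact T.hs ⟨k + 1, h1⟩ l
        have hxzero : ∀ l, T.σ k h1 l = none → x l = 0 := by
          intro l hl
          have hne : l ≠ l₂ := by
            rintro rfl
            rw [hl] at hσ2
            cases hσ2
          rw [hxdef, Function.update_of_ne hne]
          exact (T.hcoord k h1 l).1 hl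
        obtain ⟨x', hx'unit, hrel', hmatch⟩ := T.hface k h1 x hxunit hxzero
        have hg := (hglue x' x hx'unit hxunit).mp hrel'
        refine ⟨x', hx'unit, hg.1, hg.2, ?_⟩
        rw [hmatch l₂ l₁ hσ2, hxdef, Function.update_self]
      cases hcl1 : c₁ l₁ with
      | some b =>
        obtain ⟨x', -, hface', -, hx'l₁⟩ := key (1/2) (by norm_num) (by norm_num)
        have hb := (hface' l₁).1 b hcl1
        rw [hx'l₁] at hb
        cases b <;> norm_num at hb
      | none =>
        obtain ⟨⟨l₂', hl₂'⟩, hl₂'f⟩ := hbij.2 ⟨l₁, hcl1⟩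
        have hne2 : l₂' ≠ l₂ := by
          intro hll
          apply hl₁ne
          have heq : (⟨l₂', hl₂'⟩ : {l // c₂ l = none}) = ⟨l₂, hl₂⟩ := Subtype.ext hll
          rw [heq, hl₂f] at hl₂'f
          exact (congrArg Subtype.val hl₂'f).symm
        obtain ⟨x0, -, hf0, hh0, h0l₁⟩ := key 0 le_rfl zero_le_one
        obtain ⟨x1, -, hf1, hh1, h1l₁⟩ := key 1 zero_le_one le_rfl
        have e0 := (hspec x0 hf0).2 l₂' hl₂'
        have e1 := (hspec x1 hf1).2 l₂' hl₂'
        rw [hh0, hl₂'f, Function.update_of_ne hne2] at e0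
        rw [hh1, hl₂'f, Function.update_of_ne hne2] at e1
        simp only [] at e0 e1
        rw [h0l₁] at e0
        rw [h1l₁] at e1
        rw [e0] at e1
        cases hb : fl ⟨l₂', hl₂'⟩ <;> rw [hb] at e1 <;> simp at e1

end CubeComplex

end AuxLemmas

/-- In a cube complex of dimension at most `n` with the `l_∞` metric, every taut
`(n+2)`-string has length at least `1`. -/
theorem tautString_length_ge_one (C : CubeComplex) (n : ℕ) (hdim : C.DimLE n)
    (T : C.TautString (n + 2)) : 1 ≤ T.length := by
  by_contra hcon
  push_neg at hcon
  have hlen_nonneg : ∀ k : Fin (n + 2), 0 ≤ lpDist ⊤ (T.s k) (T.e k) :=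
    fun k => lpDist_top_nonneg _ _
  have hsum_le : ∀ x : Fin (n + 2),
      ∑ j ∈ Finset.Iic x, lpDist ⊤ (T.s j) (T.e j) ≤ T.length := fun x =>
    Finset.sum_le_sum_of_subset_of_nonneg (Finset.subset_univ _)
      (fun j _ _ => hlen_nonneg j)
  have hstep : ∀ x y : Fin (n + 2), x < y →
      (∑ j ∈ Finset.Iic x, lpDist ⊤ (T.s j) (T.e j)) + lpDist ⊤ (T.s y) (T.e y)
        ≤ ∑ j ∈ Finset.Iic y, lpDist ⊤ (T.s j) (T.e j) := by
    intro x y hxy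
    have hnotin : y ∉ Finset.Iic x := by simp [Finset.mem_Iic, not_le, hxy]
    have hsub : insert y (Finset.Iic x) ⊆ Finset.Iic y := by
      intro j hj
      rcases Finset.mem_insert.mp hj with rfl | hj
      · exact Finset.mem_Iic.mpr le_rfl
      · exact Finset.mem_Iic.mpr ((Finset.mem_Iic.mp hj).trans hxy.le)
    have h1 : (∑ j ∈ Finset.Iic x, lpDist ⊤ (T.s j) (T.e j)) + lpDist ⊤ (T.s y) (T.e y)
        = ∑ j ∈ insert y (Finset.Iic x), lpDist ⊤ (T.s j) (T.e j) := by
      rw [Finset.sum_insert hnotin]; ring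
    rw [h1]
    exact Finset.sum_le_sum_of_subset_of_nonneg hsub (fun j _ _ => hlen_nonneg j)
  have hcoordle : ∀ (k : Fin (n + 2)) l, T.e k l ≤ T.s k l + lpDist ⊤ (T.s k) (T.e k) := by
    intro k l
    have h1 := abs_le_lpDist_top (T.s k) (T.e k) l
    rw [abs_sub_comm, abs_of_nonneg (by linarith [T.hmono k l])] at h1
    linarith
  have key : ∀ k : ℕ, ∀ hk : k + 1 < n + 2,
      ∃ f : Fin (k + 1) → Fin (C.dim (T.cube ⟨k + 1, hk⟩)), Function.Injective f ∧
        ∀ a, 0 < T.e ⟨k + 1, hk⟩ (f a) ∧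
          T.e ⟨k + 1, hk⟩ (f a) ≤
            ∑ j ∈ Finset.Iic (⟨k + 1, hk⟩ : Fin (n + 2)), lpDist ⊤ (T.s j) (T.e j) := by
    intro k
    induction k with
    | zero =>
      intro hk
      obtain ⟨l, hlnone, hlpos⟩ := T.fresh 0 hk
      refine ⟨fun _ => l, fun a b _ => by apply Fin.ext; omega, fun a => ⟨hlpos, ?_⟩⟩
      have hs0 : T.s ⟨1, hk⟩ l = 0 := (T.hcoord 0 hk l).1 hlnone
      have h2 := hcoordle ⟨1, hk⟩ l
      rw [hs0] at h2
      have h3 : lpDist ⊤ (T.s ⟨1, hk⟩) (T.e ⟨1, hk⟩) ≤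
          ∑ j ∈ Finset.Iic (⟨1, hk⟩ : Fin (n + 2)), lpDist ⊤ (T.s j) (T.e j) :=
        Finset.single_le_sum (fun j _ => hlen_nonneg j) (Finset.mem_Iic.mpr le_rfl)
      linarith
    | succ k ih =>
      intro hk
      have hk' : k + 1 < n + 2 := Nat.lt_of_succ_lt hk
      obtain ⟨f, hfinj, hfprop⟩ := ih hk'
      have hP1 : (∑ j ∈ Finset.Iic (⟨k + 1, hk'⟩ : Fin (n + 2)),
          lpDist ⊤ (T.s j) (T.e j)) < 1 := lt_of_le_of_lt (hsum_le _) hcon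
      have hpick : ∀ a : Fin (k + 1), ∃ l, T.σ (k + 1) hk l = some (f a) := fun a =>
        T.no_drop (k + 1) hk (f a) (hfprop a).1 (lt_of_le_of_lt (hfprop a).2 hP1)
      choose g hg using hpick
      obtain ⟨lf, hlfnone, hlfpos⟩ := T.fresh (k + 1) hk
      have hgne : ∀ a, g a ≠ lf := by
        intro a he
        have h2 := hg a
        rw [he, hlfnone] at h2
        cases h2
      have hginj : Function.Injective g := by
        intro a b hab
        apply hfinj
        have h1 := hg a
        rw [hab] at h1
        exact Option.some.inj (h1.symm.trans (hg b))
      refine ⟨Fin.cons lf g, ?_, ?_⟩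
      · rw [Fin.cons_injective_iff]
        exact ⟨by rintro ⟨a, ha⟩; exact hgne a ha, hginj⟩
      · intro a
        refine Fin.cases ?_ ?_ a
        · rw [Fin.cons_zero]
          refine ⟨hlfpos, ?_⟩
          have hs0 : T.s ⟨k + 1 + 1, hk⟩ lf = 0 := (T.hcoord (k + 1) hk lf).1 hlfnone
          have h2 := hcoordle ⟨k + 1 + 1, hk⟩ lf
          rw [hs0] at h2
          have h3 : lpDist ⊤ (T.s ⟨k + 1 + 1, hk⟩) (T.e ⟨k + 1 + 1, hk⟩) ≤
              ∑ j ∈ Finset.Iic (⟨k + 1 + 1, hk⟩ : Fin (n + 2)), lpDist ⊤ (T.s j) (T.e j) :=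
            Finset.single_le_sum (fun j _ => hlen_nonneg j) (Finset.mem_Iic.mpr le_rfl)
          linarith
        · intro b
          rw [Fin.cons_succ]
          have hse : T.s ⟨k + 1 + 1, hk⟩ (g b) = T.e ⟨k + 1, hk'⟩ (f b) :=
            (T.hcoord (k + 1) hk (g b)).2 (f b) (hg b)
          have hmono := T.hmono ⟨k + 1 + 1, hk⟩ (g b)
          rw [hse] at hmono
          constructor
          · exact lt_of_lt_of_le (hfprop b).1 hmono
          · have h2 := hcoordle ⟨k + 1 + 1, hk⟩ (g b)
            rw [hse] at h2
            have h3 := hstep ⟨k + 1, hk'⟩ ⟨k + 1 + 1, hk⟩ (by simp [Fin.mk_lt_mk])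
            have h4 := (hfprop b).2
            linarith
  obtain ⟨f, hfinj, -⟩ := key n (Nat.lt_succ_self (n + 1))
  have h1 : n + 1 ≤ C.dim (T.cube ⟨n + 1, Nat.lt_succ_self (n + 1)⟩) := by
    have h2 := Fintype.card_le_of_injective f hfinj
    simpa using h2
  have h3 := hdim (T.cube ⟨n + 1, Nat.lt_succ_self (n + 1)⟩)
  omega
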